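/- Let M̄ be a finite set, F_p a 2×2 real symmetric positive definite matrix, and for each y ∈ M̄ let H_y be a 2×2 real symmetric positive semidefinite matrix; write H(Y) = ∑_{y∈Y} H_y. Let Y ⊆ M̄ and A ⊆ M̄ with A \ Y ≠ ∅, and let z' ∈ argmax_{y ∈ A\Y} λ₁(F_p + H({y} ∪ Y)). Then ∑_{y ∈ A\Y} [ Tr((F_p + H(Y))⁻¹) − Tr((F_p + H({y} ∪ Y))⁻¹) ] ≥ ( ∑_{y ∈ A\Y} Tr(H_y) ) / ( λ₁(F_p + H(Y)) · λ₁(F_p + H({z'} ∪ Y)) ). -/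

import Mathlib

open Matrix

/-- The largest eigenvalue `λ₁(P)` of a real symmetric `2 × 2` matrix `P`
(for a symmetric matrix `Tr(P)² − 4 det(P) ≥ 0` and the eigenvalues are
`(Tr(P) ± √(Tr(P)² − 4 det P))/2`). -/
noncomputable def eig1 (P : Matrix (Fin 2) (Fin 2) ℝ) : ℝ :=
  (P.trace + Real.sqrt (P.trace ^ 2 - 4 * P.det)) / 2

/-- The smallest eigenvalue. -/
noncomputable def eig2 (P : Matrix (Fin 2) (Fin 2) ℝ) : ℝ :=
  (P.trace - Real.sqrt (P.trace ^ 2 - 4 * P.det)) / 2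

namespace EigAux

lemma herm_apply {P : Matrix (Fin 2) (Fin 2) ℝ} (h : P.IsHermitian) : P 1 0 = P 0 1 := by
  conv_lhs => rw [← h]
  simp [conjTranspose_apply]

lemma psd_apply {P : Matrix (Fin 2) (Fin 2) ℝ} (h : P.PosSemidef) (x : Fin 2 → ℝ) :
    0 ≤ x 0 * (P 0 0 * x 0 + P 0 1 * x 1) + x 1 * (P 1 0 * x 0 + P 1 1 * x 1) := by
  have := h.dotProduct_mulVec_nonneg x
  simpa [dotProduct, mulVec, Fin.sum_univ_two] using this

lemma diag00_nonneg {P : Matrix (Fin 2) (Fin 2) ℝ} (h : P.PosSemidef) : 0 ≤ P 0 0 := by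
  have := psd_apply h ![1, 0]; simpa using this

lemma diag11_nonneg {P : Matrix (Fin 2) (Fin 2) ℝ} (h : P.PosSemidef) : 0 ≤ P 1 1 := by
  have := psd_apply h ![0, 1]; simpa using this

lemma trace_nonneg {P : Matrix (Fin 2) (Fin 2) ℝ} (h : P.PosSemidef) : 0 ≤ P.trace := by
  rw [trace_fin_two]
  exact add_nonneg (diag00_nonneg h) (diag11_nonneg h)

lemma det_nonneg {P : Matrix (Fin 2) (Fin 2) ℝ} (h : P.PosSemidef) : 0 ≤ P.det := by
  have key : ∀ t : ℝ, 0 ≤ P 0 0 * (t * t) + (P 0 1 + P 1 0) * t + P 1 1 := by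
    intro t
    have := psd_apply h ![t, 1]
    simp only [Matrix.cons_val_zero, Matrix.cons_val_one, Matrix.head_cons] at this
    nlinarith [this]
  have hd := discrim_le_zero key
  rw [discrim, herm_apply h.1] at hd
  rw [det_fin_two, herm_apply h.1]
  nlinarith [hd]

lemma diag00_pos {P : Matrix (Fin 2) (Fin 2) ℝ} (h : P.PosDef) : 0 < P 0 0 := by
  have hx : (![1, 0] : Fin 2 → ℝ) ≠ 0 := by
    intro hc; have := congrFun hc 0; simp at this
  have := h.dotProduct_mulVec_pos hx
  simpa [dotProduct, mulVec, Fin.sum_univ_two] using this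

lemma diag11_pos {P : Matrix (Fin 2) (Fin 2) ℝ} (h : P.PosDef) : 0 < P 1 1 := by
  have hx : (![0, 1] : Fin 2 → ℝ) ≠ 0 := by
    intro hc; have := congrFun hc 1; simp at this
  have := h.dotProduct_mulVec_pos hx
  simpa [dotProduct, mulVec, Fin.sum_univ_two] using this

lemma trace_pos {P : Matrix (Fin 2) (Fin 2) ℝ} (h : P.PosDef) : 0 < P.trace := by
  rw [trace_fin_two]
  exact add_pos (diag00_pos h) (diag11_pos h)

lemma disc_nonneg {P : Matrix (Fin 2) (Fin 2) ℝ} (h : P.IsHermitian) :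
    0 ≤ P.trace ^ 2 - 4 * P.det := by
  rw [trace_fin_two, det_fin_two, herm_apply h]
  nlinarith [sq_nonneg (P 0 0 - P 1 1), sq_nonneg (P 0 1)]

lemma eig_add (P : Matrix (Fin 2) (Fin 2) ℝ) : eig1 P + eig2 P = P.trace := by
  unfold eig1 eig2; ring

lemma eig_mul {P : Matrix (Fin 2) (Fin 2) ℝ} (h : P.IsHermitian) :
    eig1 P * eig2 P = P.det := by
  have hs := Real.sq_sqrt (disc_nonneg h)
  unfold eig1 eig2
  linear_combination (-(1 : ℝ)/4) * hs

lemma eig2_le_eig1 (P : Matrix (Fin 2) (Fin 2) ℝ) : eig2 P ≤ eig1 P := by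
  unfold eig1 eig2
  have := Real.sqrt_nonneg (P.trace ^ 2 - 4 * P.det)
  linarith

lemma eig2_pos {P : Matrix (Fin 2) (Fin 2) ℝ} (hP : P.PosDef) : 0 < eig2 P := by
  have ht := trace_pos hP
  have hd := hP.det_pos
  have hdisc := disc_nonneg hP.1
  have hs := Real.sq_sqrt hdisc
  have hs0 := Real.sqrt_nonneg (P.trace ^ 2 - 4 * P.det)
  unfold eig2
  nlinarith [hs, hs0, ht, hd]

lemma eig1_pos {P : Matrix (Fin 2) (Fin 2) ℝ} (hP : P.PosDef) : 0 < eig1 P :=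
  lt_of_lt_of_le (eig2_pos hP) (eig2_le_eig1 P)

lemma posSemidef_of_fin_two {M : Matrix (Fin 2) (Fin 2) ℝ} (h : M.IsHermitian)
    (htr : 0 ≤ M.trace) (hdet : 0 ≤ M.det) : M.PosSemidef := by
  have h10 := herm_apply h
  rw [trace_fin_two] at htr
  rw [det_fin_two, h10] at hdet
  refine Matrix.PosSemidef.of_dotProduct_mulVec_nonneg h (fun x => ?_)
  have expand : dotProduct (star x) (M *ᵥ x) =
      M 0 0 * (x 0 * x 0) + 2 * M 0 1 * (x 0 * x 1) + M 1 1 * (x 1 * x 1) := by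
    simp [dotProduct, mulVec, Fin.sum_univ_two, h10]
    ring
  rw [expand]
  rcases lt_trichotomy (M 0 0) 0 with ha | ha | ha
  · exfalso
    nlinarith [sq_nonneg (M 0 1)]
  · have hb : M 0 1 = 0 := by nlinarith [sq_nonneg (M 0 1)]
    rw [ha, hb]
    nlinarith [sq_nonneg (x 1)]
  · nlinarith [sq_nonneg (M 0 0 * x 0 + M 0 1 * x 1), mul_nonneg hdet (mul_self_nonneg (x 1))]

lemma trace_sub_smul_one (Q : Matrix (Fin 2) (Fin 2) ℝ) (μ : ℝ) :
    (Q - μ • (1 : Matrix (Fin 2) (Fin 2) ℝ)).trace = Q.trace - 2 * μ := by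
  simp [trace_fin_two, Matrix.sub_apply, Matrix.smul_apply, Matrix.one_apply]
  ring

lemma det_sub_smul_one (Q : Matrix (Fin 2) (Fin 2) ℝ) (μ : ℝ) :
    (Q - μ • (1 : Matrix (Fin 2) (Fin 2) ℝ)).det = Q.det - μ * Q.trace + μ ^ 2 := by
  simp [det_fin_two, trace_fin_two, Matrix.sub_apply, Matrix.smul_apply, Matrix.one_apply]
  ring

lemma herm_sub_smul_one {Q : Matrix (Fin 2) (Fin 2) ℝ} (h : Q.IsHermitian) (μ : ℝ) :
    (Q - μ • (1 : Matrix (Fin 2) (Fin 2) ℝ)).IsHermitian := by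
  unfold Matrix.IsHermitian at *
  rw [conjTranspose_sub, conjTranspose_smul, h, conjTranspose_one, star_trivial]

lemma eig2_shift_psd {P : Matrix (Fin 2) (Fin 2) ℝ} (hP : P.PosDef) :
    (P - eig2 P • (1 : Matrix (Fin 2) (Fin 2) ℝ)).PosSemidef := by
  have hdisc := disc_nonneg hP.1
  have hs := Real.sq_sqrt hdisc
  have hs0 := Real.sqrt_nonneg (P.trace ^ 2 - 4 * P.det)
  apply posSemidef_of_fin_two (herm_sub_smul_one hP.1 _)
  · rw [trace_sub_smul_one]
    unfold eig2
    linarith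
  · rw [det_sub_smul_one]
    unfold eig2
    nlinarith [hs]

lemma eig2_le_of_shift_psd {Q : Matrix (Fin 2) (Fin 2) ℝ} {μ : ℝ}
    (h : (Q - μ • (1 : Matrix (Fin 2) (Fin 2) ℝ)).PosSemidef) : μ ≤ eig2 Q := by
  have htr : 0 ≤ Q.trace - 2 * μ := by
    rw [← trace_sub_smul_one]; exact trace_nonneg h
  have hdet : 0 ≤ Q.det - μ * Q.trace + μ ^ 2 := by
    rw [← det_sub_smul_one]; exact det_nonneg h
  have h2 : Q.trace ^ 2 - 4 * Q.det ≤ (Q.trace - 2 * μ) ^ 2 := by nlinarith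
  have hle : Real.sqrt (Q.trace ^ 2 - 4 * Q.det) ≤ Q.trace - 2 * μ := by
    calc Real.sqrt (Q.trace ^ 2 - 4 * Q.det) ≤ Real.sqrt ((Q.trace - 2 * μ) ^ 2) :=
          Real.sqrt_le_sqrt h2
      _ = Q.trace - 2 * μ := Real.sqrt_sq htr
  unfold eig2
  linarith

lemma eig2_mono {P H : Matrix (Fin 2) (Fin 2) ℝ} (hP : P.PosDef) (hH : H.PosSemidef) :
    eig2 P ≤ eig2 (P + H) := by
  apply eig2_le_of_shift_psd (Q := P + H) (μ := eig2 P)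
  have hrw : P + H - eig2 P • (1 : Matrix (Fin 2) (Fin 2) ℝ) =
      (P - eig2 P • (1 : Matrix (Fin 2) (Fin 2) ℝ)) + H := by abel
  rw [hrw]
  exact (eig2_shift_psd hP).add hH

lemma trace_inv₂ {P : Matrix (Fin 2) (Fin 2) ℝ} (h : P.PosDef) :
    P⁻¹.trace = P.trace / P.det := by
  rw [Matrix.inv_def, Ring.inverse_eq_inv', trace_smul, adjugate_fin_two]
  rw [trace_fin_two, trace_fin_two]
  simp [smul_eq_mul]
  ring

/-- Per-element key inequality. -/
lemma key {P Hm : Matrix (Fin 2) (Fin 2) ℝ} (hP : P.PosDef) (hH : Hm.PosSemidef) :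
    Hm.trace / (eig1 P * eig1 (P + Hm)) ≤ P⁻¹.trace - (P + Hm)⁻¹.trace := by
  have hQ : (P + Hm).PosDef := hP.add_posSemidef hH
  have ha := eig1_pos hP
  have hb := eig2_pos hP
  have hA := eig1_pos hQ
  have hB := eig2_pos hQ
  have hba := eig2_le_eig1 P
  have hBA := eig2_le_eig1 (P + Hm)
  have hbB := eig2_mono hP hH
  have hsP := eig_add P
  have hpP := eig_mul hP.1
  have hsQ := eig_add (P + Hm)
  have hpQ := eig_mul hQ.1
  have htr : Hm.trace = (eig1 (P + Hm) + eig2 (P + Hm)) - (eig1 P + eig2 P) := by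
    rw [hsP, hsQ, trace_add]; ring
  rw [trace_inv₂ hP, trace_inv₂ hQ, ← hsP, ← hpP, ← hsQ, ← hpQ, htr]
  set a := eig1 P
  set b := eig2 P
  set A := eig1 (P + Hm)
  set B := eig2 (P + Hm)
  have h1 : b * B ≤ a * A := mul_le_mul hba hBA hB.le ha.le
  rw [div_sub_div _ _ (mul_pos ha hb).ne' (mul_pos hA hB).ne',
    div_le_div_iff₀ (mul_pos ha hA) (mul_pos (mul_pos ha hb) (mul_pos hA hB))]
  nlinarith [mul_nonneg (mul_pos ha hA).le
    (mul_nonneg (sub_nonneg.2 hbB) (sub_nonneg.2 h1)), ha, hb, hA, hB]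

end EigAux

/-- Eqs. (40)–(41) in the proof of Lemma 4: lower bound on
`∑_{y∈A\Y} [Tr((F_p+H(Y))⁻¹) − Tr((F_p+H({y}∪Y))⁻¹)]`, where
`z' ∈ argmax_{y∈A\Y} λ₁(F_p + H({y}∪Y))`. -/
theorem fPa_marginal_sum_lower_bound
    {ι : Type*} [Fintype ι] [DecidableEq ι]
    (Fp : Matrix (Fin 2) (Fin 2) ℝ) (H : ι → Matrix (Fin 2) (Fin 2) ℝ)
    (hFp : Fp.PosDef) (hH : ∀ y, (H y).PosSemidef)
    (Y A : Finset ι) (hAY : (A \ Y).Nonempty)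
    (z' : ι) (hz' : z' ∈ A \ Y)
    (hz'max : ∀ y ∈ A \ Y,
      eig1 (Fp + ∑ w ∈ insert y Y, H w) ≤ eig1 (Fp + ∑ w ∈ insert z' Y, H w)) :
    (∑ y ∈ A \ Y, (H y).trace) /
        (eig1 (Fp + ∑ w ∈ Y, H w) * eig1 (Fp + ∑ w ∈ insert z' Y, H w)) ≤
      ∑ y ∈ A \ Y,
        ((Fp + ∑ w ∈ Y, H w)⁻¹.trace - (Fp + ∑ w ∈ insert y Y, H w)⁻¹.trace) := by
  have hsumpsd : ∀ T : Finset ι, (∑ w ∈ T, H w).PosSemidef := by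
    intro T
    induction T using Finset.induction with
    | empty => simpa using (Matrix.PosSemidef.zero : (0 : Matrix (Fin 2) (Fin 2) ℝ).PosSemidef)
    | @insert _ _ hx ih =>
      rw [Finset.sum_insert hx]
      exact (hH _).add ih
  set S : Matrix (Fin 2) (Fin 2) ℝ := Fp + ∑ w ∈ Y, H w with hSdef
  have hS : S.PosDef := hFp.add_posSemidef (hsumpsd Y)
  have hins : ∀ y ∈ A \ Y, Fp + ∑ w ∈ insert y Y, H w = S + H y := by
    intro y hy
    have hyY : y ∉ Y := (Finset.mem_sdiff.1 hy).2
    rw [Finset.sum_insert hyY, hSdef]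
    abel
  have hz'eq := hins z' hz'
  rw [Finset.sum_div]
  apply Finset.sum_le_sum
  intro y hy
  have hyeq := hins y hy
  rw [hyeq, hz'eq]
  have hQy : (S + H y).PosDef := hS.add_posSemidef (hH y)
  have hQz : (S + H z').PosDef := hS.add_posSemidef (hH z')
  have hmax : eig1 (S + H y) ≤ eig1 (S + H z') := by
    have := hz'max y hy
    rwa [hyeq, hz'eq] at this
  calc (H y).trace / (eig1 S * eig1 (S + H z'))
      ≤ (H y).trace / (eig1 S * eig1 (S + H y)) := by
        apply div_le_div_of_nonneg_left (EigAux.trace_nonneg (hH y))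
          (mul_pos (EigAux.eig1_pos hS) (EigAux.eig1_pos hQy))
        exact mul_le_mul_of_nonneg_left hmax (EigAux.eig1_pos hS).le
    _ ≤ S⁻¹.trace - (S + H y)⁻¹.trace := EigAux.key hS (hH y)
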